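/- Let U be a connected topological space, σ₀ ∈ ℂ, ε > 0, and let q : U × ℂ → ℂ be continuous on U × closedBall(σ₀,ε), with σ ↦ q(y,σ) holomorphic on B(σ₀,ε) for each y ∈ U, and with q(y,σ) ≠ 0 for all y ∈ U whenever ε/2 ≤ |σ − σ₀| ≤ ε. Then for every y ∈ U the zero set Z_y = {σ ∈ B(σ₀,ε) : q(y,σ) = 0} is a finite subset of B(σ₀,ε/2), and the total number of zeros counted with multiplicity, Σ_{z ∈ Z_y} ord_z(q(y,·)), is independent of y ∈ U, where ord_z(q(y,·)) denotes the unique d ∈ ℕ such that q(y,σ) = (σ − z)^d h(σ) for some h holomorphic near z with h(z) ≠ 0. -/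

import Mathlib

open Metric Set Complex

noncomputable section

/-- A principal part at `c ∈ ℂ` with values in a complex vector space `E`:
`φ(σ) = ∑_{k=1}^m a_k (σ - c)^{-k}` (with the convention that the value at the pole is `0`,
coming from `0⁻¹ = 0` in Lean; for `σ ≠ c` this is exactly the usual formula). -/
def IsPrincipalPart {E : Type*} [AddCommGroup E] [Module ℂ E] (c : ℂ) (φ : ℂ → E) : Prop :=
  ∃ (m : ℕ) (a : ℕ → E), ∀ σ : ℂ, φ σ = ∑ k ∈ Finset.Icc 1 m, ((σ - c) ^ (-(k : ℤ))) • a k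

/-- A singular function with poles in `S ⊆ ℂ`: a finite sum of principal parts at
finitely many points of `S`. -/
def IsSingularFunction {E : Type*} [AddCommGroup E] [Module ℂ E] (S : Set ℂ) (φ : ℂ → E) :
    Prop :=
  ∃ (F : Finset ℂ) (p : ℂ → ℂ → E), (↑F : Set ℂ) ⊆ S ∧ (∀ c ∈ F, IsPrincipalPart c (p c)) ∧
    ∀ σ : ℂ, φ σ = ∑ c ∈ F, p c σ

/-- The space `𝒦` of singular functions `φ` with poles in `Ω` such that `σ ↦ P σ (φ σ)`
agrees, off a finite set (the poles of `φ`), with a function holomorphic on all of `Ω`. -/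
def kernelSpace {𝒟 H : Type*} [NormedAddCommGroup 𝒟] [NormedSpace ℂ 𝒟]
    [NormedAddCommGroup H] [NormedSpace ℂ H]
    (Ω : Set ℂ) (P : ℂ → (𝒟 →L[ℂ] H)) : Set (ℂ → 𝒟) :=
  {φ | IsSingularFunction Ω φ ∧ ∃ g : ℂ → H, DifferentiableOn ℂ g Ω ∧
    ∃ F : Set ℂ, F.Finite ∧ ∀ σ ∈ Ω \ F, P σ (φ σ) = g σ}

/-- The local kernel space `𝔎(𝔓, S)` of a holomorphic family of `n × n` matrices on `D`:
singular functions `φ : ℂ → ℂⁿ` with poles in `S` such that `σ ↦ 𝔓(σ) · φ(σ)` agrees,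
off a finite set (the poles of `φ`), with a function holomorphic on all of `D`. -/
def matKernelSpace {n : ℕ} (D : Set ℂ) (P : ℂ → Matrix (Fin n) (Fin n) ℂ) (S : Set ℂ) :
    Set (ℂ → (Fin n → ℂ)) :=
  {φ | IsSingularFunction S φ ∧ ∃ g : ℂ → (Fin n → ℂ),
    (∀ i, DifferentiableOn ℂ (fun σ => g σ i) D) ∧
    ∃ F : Set ℂ, F.Finite ∧ ∀ σ ∈ D \ F, (P σ).mulVec (φ σ) = g σ}

/-- A subset `K` of a complex vector space (in practice a linear subspace) has a basis of
cardinality `d`: there are `d` elements of `K` that are linearly independent and span `K`. -/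
def HasBasisOfCard {E : Type*} [AddCommGroup E] [Module ℂ E] (K : Set E) (d : ℕ) : Prop :=
  ∃ φ : Fin d → E, (∀ i, φ i ∈ K) ∧ LinearIndependent ℂ φ ∧
    ∀ ψ ∈ K, ψ ∈ Submodule.span ℂ (Set.range φ)

/-- A bounded operator is Fredholm of index `0`: finite-dimensional kernel, closed range,
finite-dimensional cokernel, and `dim ker = dim coker`. -/
def FredholmIndexZero {𝒟 H : Type*} [NormedAddCommGroup 𝒟] [NormedSpace ℂ 𝒟]
    [NormedAddCommGroup H] [NormedSpace ℂ H] (T : 𝒟 →L[ℂ] H) : Prop :=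
  FiniteDimensional ℂ (LinearMap.ker (T : 𝒟 →ₗ[ℂ] H)) ∧ IsClosed (LinearMap.range (T : 𝒟 →ₗ[ℂ] H) : Set H) ∧
    FiniteDimensional ℂ (H ⧸ LinearMap.range (T : 𝒟 →ₗ[ℂ] H)) ∧
    Module.finrank ℂ (LinearMap.ker (T : 𝒟 →ₗ[ℂ] H)) = Module.finrank ℂ (H ⧸ LinearMap.range (T : 𝒟 →ₗ[ℂ] H))

open Filter Topology

/-- Circle integral of a sum. -/
lemma myCircleIntegral_add {f g : ℂ → ℂ} {c : ℂ} {R : ℝ}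
    (hf : CircleIntegrable f c R) (hg : CircleIntegrable g c R) :
    (∮ z in C(c, R), (f z + g z)) = (∮ z in C(c, R), f z) + ∮ z in C(c, R), g z := by
  simp only [circleIntegral, smul_add]
  exact intervalIntegral.integral_add hf.out hg.out

/-- Finiteness of the zero set in a compact subdisc. -/
lemma myFiniteZeros {f : ℂ → ℂ} {c : ℂ} {R ε : ℝ} (hRε : R < ε)
    (hf : DifferentiableOn ℂ f (ball c ε))
    (hne : ∃ σ ∈ ball c ε, f σ ≠ 0) :
    {σ | σ ∈ closedBall c R ∧ f σ = 0}.Finite := by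
  by_contra hinf
  have hinf : Set.Infinite {σ | σ ∈ closedBall c R ∧ f σ = 0} := hinf
  obtain ⟨x, hxK, hx⟩ := hinf.exists_accPt_of_subset_isCompact
    (isCompact_closedBall c R) (fun σ hσ => hσ.1)
  have hxball : x ∈ ball c ε := lt_of_le_of_lt (mem_closedBall.1 hxK) hRε
  have hfreq : ∃ᶠ z in 𝓝[≠] x, f z = 0 := by
    rw [accPt_iff_frequently] at hx
    rw [frequently_nhdsWithin_iff]
    exact hx.mono (fun z hz => ⟨hz.2.2, hz.1⟩)
  have h0 := (hf.analyticOnNhd isOpen_ball).eqOn_zero_of_preconnected_of_frequently_eq_zero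
    (convex_ball c ε).isPreconnected hxball hfreq
  obtain ⟨σ, hσ, hσ0⟩ := hne
  exact hσ0 (h0 hσ)

/-- The argument principle, by induction on the number of zeros. -/
lemma myArgPrinciple {c : ℂ} {R ε : ℝ} (hR : 0 < R) (hRε : R < ε) :
    ∀ (n : ℕ) (f : ℂ → ℂ) (Z : Finset ℂ), Z.card = n →
    DifferentiableOn ℂ f (ball c ε) →
    (∀ σ ∈ sphere c R, f σ ≠ 0) →
    ((↑Z : Set ℂ) = {σ | σ ∈ closedBall c R ∧ f σ = 0}) →
    ∃ ord : ℂ → ℕ,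
      (∀ z ∈ Z, 0 < ord z ∧ ∃ h : ℂ → ℂ, AnalyticAt ℂ h z ∧ h z ≠ 0 ∧
          ∀ᶠ σ in 𝓝 z, f σ = (σ - z) ^ (ord z) * h σ) ∧
      (∮ σ in C(c, R), logDeriv f σ) = 2 * Real.pi * I * ((∑ z ∈ Z, ord z : ℕ) : ℂ) := by
  have hsub : closedBall c R ⊆ ball c ε := closedBall_subset_ball hRε
  intro n
  induction n with
  | zero =>
    intro f Z hcard hf hsph hZ
    have hZe : Z = ∅ := Finset.card_eq_zero.1 hcard
    subst hZe
    refine ⟨fun _ => 0, by simp, ?_⟩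
    have hA : AnalyticOnNhd ℂ f (ball c ε) := hf.analyticOnNhd isOpen_ball
    have hne : ∀ σ ∈ closedBall c R, f σ ≠ 0 := by
      intro σ hσ h0
      have : σ ∈ (↑(∅ : Finset ℂ) : Set ℂ) := by rw [hZ]; exact ⟨hσ, h0⟩
      simpa using this
    have hder : AnalyticOnNhd ℂ (deriv f) (ball c ε) := hA.deriv
    have hcont : ContinuousOn (logDeriv f) (closedBall c R) := by
      apply ContinuousOn.div
      · exact (hder.continuousOn).mono hsub
      · exact (hA.continuousOn).mono hsub
      · exact hne
    have hdiff : ∀ z ∈ ball c R \ (∅ : Set ℂ), DifferentiableAt ℂ (logDeriv f) z := by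
      intro z hz
      have hzb : z ∈ ball c ε := ball_subset_ball hRε.le hz.1
      exact ((hder z hzb).differentiableAt).div ((hA z hzb).differentiableAt)
        (hne z (ball_subset_closedBall hz.1))
    rw [Complex.circleIntegral_eq_zero_of_differentiable_on_off_countable hR.le
      Set.countable_empty hcont hdiff]
    simp
  | succ n IH =>
    intro f Z hcard f_diff hsph hZ
    have hA : AnalyticOnNhd ℂ f (ball c ε) := f_diff.analyticOnNhd isOpen_ball
    -- pick a zero z
    have hZne : Z.Nonempty := Finset.card_pos.1 (hcard ▸ n.succ_pos)
    obtain ⟨z, hzZ⟩ := hZne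
    have hzmem : z ∈ closedBall c R ∧ f z = 0 := by
      have : z ∈ (↑Z : Set ℂ) := hzZ
      rwa [hZ] at this
    have hzns : z ∉ sphere c R := fun h => hsph z h hzmem.2
    have hzball : z ∈ ball c R := by
      rcases lt_or_eq_of_le (mem_closedBall.1 hzmem.1) with h | h
      · exact h
      · exact absurd (mem_sphere.2 h) hzns
    have hzε : z ∈ ball c ε := hsub hzmem.1
    -- f is not eventually zero near z
    have hnev : ¬ ∀ᶠ σ in 𝓝 z, f σ = 0 := by
      intro hev
      have h0 := hA.eqOn_zero_of_preconnected_of_frequently_eq_zero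
        (convex_ball c ε).isPreconnected hzε
        (Filter.Eventually.frequently (hev.filter_mono nhdsWithin_le_nhds))
      have hcR : (c + R : ℂ) ∈ sphere c R := by
        simp [Complex.dist_eq, abs_of_pos hR]
      exact hsph _ hcR (h0 (hsub (sphere_subset_closedBall hcR)))
    -- the order of the zero
    have hAz : AnalyticAt ℂ f z := hA z hzε
    have hord_ne_top : analyticOrderAt f z ≠ ⊤ := fun h => hnev (analyticOrderAt_eq_top.1 h)
    set m : ℕ := (analyticOrderAt f z).toNat with hm
    have hordm : analyticOrderAt f z = (m : ℕ∞) := (ENat.coe_toNat hord_ne_top).symm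
    obtain ⟨h₀, h₀an, h₀ne, h₀ev⟩ := (hAz.analyticOrderAt_eq_natCast (n := m)).1 hordm
    have hmpos : 0 < m := by
      rcases Nat.eq_zero_or_pos m with h | h
      · exfalso
        have := h₀ev.self_of_nhds
        rw [h, pow_zero, one_smul] at this
        exact h₀ne (this ▸ hzmem.2)
      · exact h
    -- divide out the zero at z
    set g : ℂ → ℂ := Function.update (fun σ => f σ / (σ - z) ^ m) z (h₀ z) with hgdef
    have g_off : ∀ σ : ℂ, σ ≠ z → g σ = f σ / (σ - z) ^ m := fun σ hσ =>
      Function.update_of_ne hσ _ _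
    have g_at : g z = h₀ z := Function.update_self _ _ _
    have g_near : ∀ᶠ σ in 𝓝 z, g σ = h₀ σ := by
      filter_upwards [h₀ev] with σ hσ
      by_cases hsz : σ = z
      · subst hsz; exact g_at
      · rw [g_off σ hsz, hσ, smul_eq_mul,
          mul_div_cancel_left₀ _ (pow_ne_zero _ (sub_ne_zero.2 hsz))]
    have hfac : ∀ σ : ℂ, f σ = (σ - z) ^ m * g σ := by
      intro σ
      by_cases hsz : σ = z
      · subst hsz
        rw [hzmem.2, sub_self, zero_pow hmpos.ne', zero_mul]
      · rw [g_off σ hsz, mul_div_cancel₀ _ (pow_ne_zero _ (sub_ne_zero.2 hsz))]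
    have g_an_z : AnalyticAt ℂ g z := h₀an.congr (EventuallyEq.symm g_near)
    have g_ne_z : g z ≠ 0 := by rw [g_at]; exact h₀ne
    have g_diff : DifferentiableOn ℂ g (ball c ε) := by
      intro σ hσ
      by_cases hsz : σ = z
      · subst hsz; exact g_an_z.differentiableAt.differentiableWithinAt
      · have hEq : g =ᶠ[𝓝 σ] fun w => f w / (w - z) ^ m := by
          filter_upwards [eventually_ne_nhds hsz] with w hw
          exact g_off w hw
        have hdiv : DifferentiableAt ℂ (fun w => f w / (w - z) ^ m) σ :=
          ((hA σ hσ).differentiableAt).div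
            (((differentiableAt_id.sub_const z).pow m))
            (pow_ne_zero _ (sub_ne_zero.2 hsz))
        exact (hdiv.congr_of_eventuallyEq hEq).differentiableWithinAt
    have gA : AnalyticOnNhd ℂ g (ball c ε) := g_diff.analyticOnNhd isOpen_ball
    have g_sph : ∀ σ ∈ sphere c R, g σ ≠ 0 := by
      intro σ hσ
      have hσz : σ ≠ z := fun h => hsph σ hσ (h ▸ hzmem.2)
      rw [g_off σ hσz]
      exact div_ne_zero (hsph σ hσ) (pow_ne_zero _ (sub_ne_zero.2 hσz))
    have hZg : ((↑(Z.erase z) : Set ℂ)) = {σ | σ ∈ closedBall c R ∧ g σ = 0} := by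
      ext σ
      simp only [Finset.coe_erase, Set.mem_diff, Set.mem_singleton_iff, mem_setOf_eq,
        Finset.mem_coe]
      constructor
      · rintro ⟨hσZ, hσz⟩
        have : σ ∈ closedBall c R ∧ f σ = 0 := by
          have : σ ∈ (↑Z : Set ℂ) := hσZ
          rwa [hZ] at this
        refine ⟨this.1, ?_⟩
        rw [g_off σ hσz, this.2, zero_div]
      · rintro ⟨hσcb, hσg⟩
        have hσz : σ ≠ z := fun h => g_ne_z (h ▸ hσg)
        have hfσ : f σ = 0 := by rw [hfac σ, hσg, mul_zero]
        have : σ ∈ (↑Z : Set ℂ) := by rw [hZ]; exact ⟨hσcb, hfσ⟩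
        exact ⟨this, hσz⟩
    have hcard' : (Z.erase z).card = n := by
      rw [Finset.card_erase_of_mem hzZ, hcard]; rfl
    obtain ⟨ordg, hordg, hintg⟩ := IH g (Z.erase z) hcard' g_diff g_sph hZg
    set ord : ℂ → ℕ := Function.update ordg z m with horddef
    have hordz : ord z = m := Function.update_self _ _ _
    have hordw : ∀ w : ℂ, w ≠ z → ord w = ordg w := fun w hw =>
      Function.update_of_ne hw _ _
    refine ⟨ord, ?_, ?_⟩
    · intro w hwZ
      by_cases hwz : w = z
      · subst hwz
        refine ⟨hordz ▸ hmpos, h₀, h₀an, h₀ne, ?_⟩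
        filter_upwards [h₀ev] with σ hσ
        rw [hordz, hσ, smul_eq_mul]
      · have hw' : w ∈ Z.erase z := Finset.mem_erase.2 ⟨hwz, hwZ⟩
        obtain ⟨hpos, h', h'an, h'ne, h'ev⟩ := hordg w hw'
        refine ⟨(hordw w hwz) ▸ hpos, fun σ => (σ - z) ^ m * h' σ, ?_, ?_, ?_⟩
        · exact (((analyticAt_id).sub analyticAt_const).pow m).mul h'an
        · exact mul_ne_zero (pow_ne_zero _ (sub_ne_zero.2 hwz)) h'ne
        · filter_upwards [h'ev] with σ hσ
          rw [hfac σ, hσ, hordw w hwz]; ring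
    · -- the integral computation
      have hEqOn : ∀ σ ∈ sphere c R,
          logDeriv f σ = (m : ℂ) * (σ - z)⁻¹ + logDeriv g σ := by
        intro σ hσ
        have hσball : σ ∈ ball c ε := hsub (sphere_subset_closedBall hσ)
        have hσz : σ ≠ z := fun h => hsph σ hσ (by rw [h]; exact hzmem.2)
        have hgσ : g σ ≠ 0 := g_sph σ hσ
        have hg' : HasDerivAt g (deriv g σ) σ := (gA σ hσball).differentiableAt.hasDerivAt
        have hpow : HasDerivAt (fun w : ℂ => (w - z) ^ m)
            ((m : ℂ) * (σ - z) ^ (m - 1) * 1) σ := ((hasDerivAt_id σ).sub_const z).pow m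
        have hF : HasDerivAt (fun w => (w - z) ^ m * g w)
            (((m : ℂ) * (σ - z) ^ (m - 1) * 1) * g σ + (σ - z) ^ m * deriv g σ) σ :=
          hpow.mul hg'
        have hfun : f = fun w => (w - z) ^ m * g w := funext hfac
        have hderivf : deriv f σ =
            ((m : ℂ) * (σ - z) ^ (m - 1) * 1) * g σ + (σ - z) ^ m * deriv g σ := by
          rw [hfun]; exact hF.deriv
        obtain ⟨k, hk⟩ := Nat.exists_eq_succ_of_ne_zero hmpos.ne'
        rw [logDeriv_apply, logDeriv_apply, hderivf, hfac σ, hk]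
        simp only [Nat.succ_sub_one, mul_one]
        have hσz' : σ - z ≠ 0 := sub_ne_zero.2 hσz
        field_simp
        push_cast [pow_succ]
        ring
      have hc1 : ContinuousOn (fun σ : ℂ => (m : ℂ) * (σ - z)⁻¹) (sphere c R) := by
        apply ContinuousOn.mul continuousOn_const
        apply ContinuousOn.inv₀ (continuousOn_id.sub continuousOn_const)
        intro σ hσ
        exact sub_ne_zero.2 (fun h => hsph σ hσ (by simp only [id_eq] at h; rw [h]; exact hzmem.2))
      have hc2 : ContinuousOn (logDeriv g) (sphere c R) := by
        apply ContinuousOn.div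
        · exact (gA.deriv.continuousOn).mono ((sphere_subset_closedBall).trans hsub)
        · exact (gA.continuousOn).mono ((sphere_subset_closedBall).trans hsub)
        · exact g_sph
      have hint1 := hc1.circleIntegrable hR.le
      have hint2 := hc2.circleIntegrable hR.le
      have hsum : (∑ w ∈ Z, ord w : ℕ) = m + ∑ w ∈ Z.erase z, ordg w := by
        rw [← Finset.add_sum_erase _ ord hzZ, hordz]
        congr 1
        exact Finset.sum_congr rfl fun w hw => hordw w (Finset.mem_erase.1 hw).1
      calc (∮ σ in C(c, R), logDeriv f σ)
          = ∮ σ in C(c, R), ((m : ℂ) * (σ - z)⁻¹ + logDeriv g σ) :=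
            circleIntegral.integral_congr hR.le (fun σ hσ => hEqOn σ hσ)
        _ = (∮ σ in C(c, R), (m : ℂ) * (σ - z)⁻¹) + ∮ σ in C(c, R), logDeriv g σ :=
            myCircleIntegral_add hint1 hint2
        _ = (m : ℂ) * (2 * Real.pi * I) +
              2 * Real.pi * I * ((∑ w ∈ Z.erase z, ordg w : ℕ) : ℂ) := by
            rw [circleIntegral.integral_const_mul,
              circleIntegral.integral_sub_inv_of_mem_ball hzball, hintg]
        _ = 2 * Real.pi * I * ((∑ w ∈ Z, ord w : ℕ) : ℂ) := by
            rw [hsum]; push_cast; ring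

/-- Packaging: finiteness + argument principle. -/
lemma myIntegerValued {c : ℂ} {R ε : ℝ} (hR : 0 < R) (hRε : R < ε) {f : ℂ → ℂ}
    (hd : DifferentiableOn ℂ f (ball c ε)) (hsph : ∀ σ ∈ sphere c R, f σ ≠ 0) :
    ∃ (Z : Finset ℂ) (ord : ℂ → ℕ),
      ((↑Z : Set ℂ) = {σ | σ ∈ closedBall c R ∧ f σ = 0}) ∧
      (∀ z ∈ Z, 0 < ord z ∧ ∃ h : ℂ → ℂ, AnalyticAt ℂ h z ∧ h z ≠ 0 ∧
          ∀ᶠ σ in 𝓝 z, f σ = (σ - z) ^ (ord z) * h σ) ∧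
      (∮ σ in C(c, R), logDeriv f σ) = 2 * Real.pi * I * ((∑ z ∈ Z, ord z : ℕ) : ℂ) := by
  have hcR : (c + R : ℂ) ∈ sphere c R := by simp [Complex.dist_eq, abs_of_pos hR]
  have hfin : {σ | σ ∈ closedBall c R ∧ f σ = 0}.Finite :=
    myFiniteZeros hRε hd ⟨c + R, closedBall_subset_ball hRε (sphere_subset_closedBall hcR),
      hsph _ hcR⟩
  obtain ⟨ord, h1, h2⟩ := myArgPrinciple hR hRε hfin.toFinset.card f hfin.toFinset rfl hd hsph
    (Set.Finite.coe_toFinset hfin)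
  exact ⟨hfin.toFinset, ord, Set.Finite.coe_toFinset hfin, h1, h2⟩

/-- A continuous function with values in `2πiℕ` on a preconnected space is constant. -/
lemma myConstant {Y : Type*} [TopologicalSpace Y] [PreconnectedSpace Y] {f : Y → ℂ}
    (hf : Continuous f) (h : ∀ y, ∃ n : ℕ, f y = 2 * Real.pi * I * n) (a b : Y) :
    f a = f b := by
  have key : ∀ m n : ℕ, (2 * Real.pi * I * m : ℂ) ≠ 2 * Real.pi * I * n → m ≠ n :=
    fun m n hmn h => hmn (by rw [h])
  have hdist : ∀ m n : ℕ, m ≠ n →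
      (2 * Real.pi : ℝ) ≤ ‖(2 * Real.pi * I * m : ℂ) - 2 * Real.pi * I * n‖ := by
    intro m n hmn
    have h1 : (2 * Real.pi * I * m : ℂ) - 2 * Real.pi * I * n
        = 2 * Real.pi * I * ((m : ℂ) - n) := by ring
    rw [h1]
    have h2 : (1 : ℝ) ≤ ‖(m : ℂ) - (n : ℂ)‖ := by
      have h3 : ((m : ℂ) - n) = ((m - n : ℤ) : ℂ) := by push_cast; ring
      rw [h3]
      rw [Complex.norm_intCast]
      have h5 : (m : ℤ) - n ≠ 0 := sub_ne_zero.2 (by exact_mod_cast hmn)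
      exact_mod_cast Int.one_le_abs h5
    calc (2 * Real.pi : ℝ) = 2 * Real.pi * 1 := by ring
      _ ≤ ‖(2 * Real.pi * I : ℂ)‖ * ‖((m : ℂ) - n)‖ := by
          have h6 : ‖(2 * Real.pi * I : ℂ)‖ = 2 * Real.pi := by
            simp [norm_mul, Complex.norm_real, Real.norm_eq_abs, abs_of_pos Real.pi_pos]
          rw [h6]
          exact mul_le_mul_of_nonneg_left h2 (by positivity)
      _ = ‖(2 * Real.pi * I * ((m : ℂ) - n) : ℂ)‖ := by rw [← norm_mul]
  have hclopen : IsClopen {y | f y = f a} := by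
    constructor
    · exact isClosed_eq hf continuous_const
    · rw [isOpen_iff_mem_nhds]
      intro y hy
      obtain ⟨n, hn⟩ := h y
      have hU : f ⁻¹' (ball (f y) (2 * Real.pi)) ∈ 𝓝 y :=
        hf.continuousAt.preimage_mem_nhds (ball_mem_nhds _ (by positivity))
      filter_upwards [hU] with w hw
      obtain ⟨m, hm⟩ := h w
      have : f w = f y := by
        by_contra hne
        have hmn : m ≠ n := key m n (by rw [← hm, ← hn]; exact hne)
        have := hdist m n hmn
        rw [← hm, ← hn] at this
        have h4 : ‖f w - f y‖ < 2 * Real.pi := by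
          rw [← dist_eq_norm]; exact mem_ball.1 hw
        linarith
      show f w = f a
      rw [this]; exact hy
  have := hclopen.eq_univ ⟨a, rfl⟩
  have hb : b ∈ {y | f y = f a} := this ▸ mem_univ b
  exact hb.symm

/-- constancy of the number of zeros, counted with multiplicity, of a continuous
family of holomorphic functions nonvanishing on the annulus `ε/2 ≤ |σ-σ₀| ≤ ε`. -/
theorem statement10 {X : Type*} [TopologicalSpace X] [ConnectedSpace X]
    (σ₀ : ℂ) (ε : ℝ) (hε : 0 < ε) (q : X → ℂ → ℂ)
    (hcont : ContinuousOn (fun p : X × ℂ => q p.1 p.2)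
      ((univ : Set X) ×ˢ closedBall σ₀ ε))
    (hholo : ∀ y : X, DifferentiableOn ℂ (q y) (ball σ₀ ε))
    (hne : ∀ y : X, ∀ σ : ℂ, ε / 2 ≤ dist σ σ₀ → dist σ σ₀ ≤ ε → q y σ ≠ 0) :
    ∃ D : ℕ, ∀ y : X, ∃ Z : Finset ℂ,
      (↑Z : Set ℂ) = {σ ∈ ball σ₀ ε | q y σ = 0} ∧
      (↑Z : Set ℂ) ⊆ ball σ₀ (ε / 2) ∧
      ∃ ord : ℂ → ℕ,
        (∀ z ∈ Z, ∃ (ρ : ℝ) (h : ℂ → ℂ), 0 < ρ ∧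
          DifferentiableOn ℂ h (ball z ρ) ∧ h z ≠ 0 ∧
          ∀ σ ∈ ball z ρ ∩ ball σ₀ ε, q y σ = (σ - z) ^ (ord z) * h σ) ∧
        ∑ z ∈ Z, ord z = D := by
  rcases isEmpty_or_nonempty X with hX | hX
  · exact ⟨0, fun y => (IsEmpty.false y).elim⟩
  set r : ℝ := 3 * ε / 4 with hrdef
  have hr : 0 < r := by positivity
  have hrε : r < ε := by rw [hrdef]; linarith
  have hsph : ∀ y : X, ∀ σ ∈ sphere σ₀ r, q y σ ≠ 0 := by
    intro y σ hσ
    have hd : dist σ σ₀ = r := mem_sphere.1 hσ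
    exact hne y σ (by rw [hd, hrdef]; linarith) (by rw [hd]; linarith)
  set W : X → ℂ := fun y => ∮ σ in C(σ₀, r), logDeriv (q y) σ with hWdef
  have hIV := fun y : X => myIntegerValued hr hrε (hholo y) (hsph y)
  -- local constancy of W
  have hloc : ∀ y₁ : X, ∃ u : Set X, IsOpen u ∧ y₁ ∈ u ∧ ∀ y ∈ u, W y = W y₁ := by
    intro y₁
    have hspne : (sphere σ₀ r).Nonempty := ⟨σ₀ + r, by simp [Complex.dist_eq, abs_of_pos hr]⟩
    have hvc : ContinuousOn (fun σ => ‖q y₁ σ‖) (sphere σ₀ r) :=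
      (((hholo y₁).continuousOn).mono (sphere_subset_closedBall.trans
        (closedBall_subset_ball hrε))).norm
    obtain ⟨σm, hσm, hmin⟩ := (isCompact_sphere σ₀ r).exists_isMinOn hspne hvc
    set δ : ℝ := ‖q y₁ σm‖ with hδdef
    have hδ : 0 < δ := norm_pos_iff.2 (hsph y₁ σm hσm)
    -- tube lemma
    set g : X × ℂ → ℂ := fun p => q p.1 p.2 - q y₁ p.2 with hgdef
    have hgc : ContinuousOn g ((univ : Set X) ×ˢ ball σ₀ ε) := by
      apply ContinuousOn.sub
      · exact hcont.mono (prod_mono Subset.rfl ball_subset_closedBall)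
      · exact ((hholo y₁).continuousOn).comp continuous_snd.continuousOn (fun p hp => hp.2)
    have hVopen : IsOpen (((univ : Set X) ×ˢ ball σ₀ ε) ∩ g ⁻¹' (ball 0 δ)) :=
      hgc.isOpen_inter_preimage (isOpen_univ.prod isOpen_ball) isOpen_ball
    have hsubV : ({y₁} : Set X) ×ˢ sphere σ₀ r ⊆
        ((univ : Set X) ×ˢ ball σ₀ ε) ∩ g ⁻¹' (ball 0 δ) := by
      rintro ⟨y, σ⟩ ⟨hy, hσ⟩
      rcases hy with rfl
      refine ⟨⟨mem_univ _, sphere_subset_closedBall.trans (closedBall_subset_ball hrε) hσ⟩, ?_⟩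
      simp only [mem_preimage, hgdef, sub_self, mem_ball, dist_zero_left, norm_zero]
      simpa using hδ
    obtain ⟨u, w, hu, hw, hyu, hsw, huw⟩ := generalized_tube_lemma isCompact_singleton
      (isCompact_sphere σ₀ r) hVopen hsubV
    refine ⟨u, hu, hyu rfl, ?_⟩
    intro y hy
    have hclose : ∀ σ ∈ sphere σ₀ r, ‖q y σ - q y₁ σ‖ < δ := by
      intro σ hσ
      have := huw (mk_mem_prod hy (hsw hσ))
      simpa [hgdef, mem_ball, dist_zero_left] using this.2
    -- the homotopy
    set ft : ℝ → ℂ → ℂ := fun t σ => q y₁ σ + (t : ℂ) * (q y σ - q y₁ σ) with hftdef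
    have hft_diff : ∀ t : ℝ, DifferentiableOn ℂ (ft t) (ball σ₀ ε) := fun t =>
      (hholo y₁).add (((hholo y).sub (hholo y₁)).const_mul _)
    have hft_sph : ∀ t ∈ Icc (0:ℝ) 1, ∀ σ ∈ sphere σ₀ r, ft t σ ≠ 0 := by
      intro t ht σ hσ h0
      have h1 : q y₁ σ = -((t : ℂ) * (q y σ - q y₁ σ)) := by linear_combination h0
      have h2 : ‖q y₁ σ‖ = |t| * ‖q y σ - q y₁ σ‖ := by
        conv_lhs => rw [h1]
        rw [norm_neg, norm_mul, Complex.norm_real, Real.norm_eq_abs]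
      have h3 : δ ≤ ‖q y₁ σ‖ := hmin hσ
      have h4 : |t| ≤ 1 := abs_le.2 ⟨by linarith [ht.1], ht.2⟩
      have h5 := hclose σ hσ
      nlinarith [norm_nonneg (q y σ - q y₁ σ)]
    haveI : PreconnectedSpace (Icc (0:ℝ) 1) := Subtype.preconnectedSpace isPreconnected_Icc
    set J : (Icc (0:ℝ) 1) → ℂ := fun t => ∮ σ in C(σ₀, r), logDeriv (ft t) σ with hJdef
    have hJint : ∀ t : (Icc (0:ℝ) 1), ∃ n : ℕ, J t = 2 * Real.pi * I * n := by
      intro t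
      obtain ⟨Z, ord, _, _, hint⟩ := myIntegerValued hr hrε (hft_diff t) (hft_sph t t.2)
      exact ⟨∑ z ∈ Z, ord z, hint⟩
    -- continuity of J
    have hJcont : Continuous J := by
      have hball : ∀ θ : ℝ, circleMap σ₀ r θ ∈ ball σ₀ ε := fun θ =>
        closedBall_subset_ball hrε (sphere_subset_closedBall (circleMap_mem_sphere σ₀ hr.le θ))
      set DU : ℝ → ℂ := fun θ => deriv (q y) (circleMap σ₀ r θ) with hDUdef
      set DV : ℝ → ℂ := fun θ => deriv (q y₁) (circleMap σ₀ r θ) with hDVdef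
      set U : ℝ → ℂ := fun θ => q y (circleMap σ₀ r θ) with hUdef
      set V : ℝ → ℂ := fun θ => q y₁ (circleMap σ₀ r θ) with hVdef
      set G : (Icc (0:ℝ) 1) → ℝ → ℂ := fun t θ =>
        (circleMap 0 r θ * I) * ((DV θ + (t : ℂ) * (DU θ - DV θ)) /
          (V θ + (t : ℂ) * (U θ - V θ))) with hGdef
      have hJeq : ∀ t : (Icc (0:ℝ) 1), J t = ∫ θ in (0:ℝ)..(2 * Real.pi), G t θ := by
        intro t
        show ∫ θ in (0:ℝ)..(2 * Real.pi),
          deriv (circleMap σ₀ r) θ • logDeriv (ft t) (circleMap σ₀ r θ) = _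
        apply intervalIntegral.integral_congr
        intro θ _
        have hξ := hball θ
        have h1 : HasDerivAt (q y₁) (deriv (q y₁) (circleMap σ₀ r θ)) (circleMap σ₀ r θ) :=
          ((((hholo y₁).analyticOnNhd isOpen_ball) _ hξ).differentiableAt).hasDerivAt
        have h2 : HasDerivAt (q y) (deriv (q y) (circleMap σ₀ r θ)) (circleMap σ₀ r θ) :=
          ((((hholo y).analyticOnNhd isOpen_ball) _ hξ).differentiableAt).hasDerivAt
        have hft : HasDerivAt (ft (t : ℝ))
            (DV θ + (t : ℂ) * (DU θ - DV θ)) (circleMap σ₀ r θ) :=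
          h1.add (((h2.sub h1)).const_mul _)
        simp only [deriv_circleMap, logDeriv_apply, smul_eq_mul, hft.deriv, hGdef]; rfl
      rw [show J = fun t => ∫ θ in (0:ℝ)..(2 * Real.pi), G t θ from funext hJeq]
      apply intervalIntegral.continuous_parametric_intervalIntegral_of_continuous'
        (μ := MeasureTheory.volume)
      -- joint continuity of G.uncurry
      have hcm : Continuous fun p : (Icc (0:ℝ) 1) × ℝ => circleMap σ₀ r p.2 :=
        (continuous_circleMap σ₀ r).comp continuous_snd
      have ht : Continuous fun p : (Icc (0:ℝ) 1) × ℝ => ((p.1 : ℝ) : ℂ) :=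
        Complex.continuous_ofReal.comp (continuous_subtype_val.comp continuous_fst)
      have hDUc : Continuous fun p : (Icc (0:ℝ) 1) × ℝ => DU p.2 :=
        (((hholo y).analyticOnNhd isOpen_ball).deriv.continuousOn).comp_continuous hcm
          (fun p => hball p.2)
      have hDVc : Continuous fun p : (Icc (0:ℝ) 1) × ℝ => DV p.2 :=
        (((hholo y₁).analyticOnNhd isOpen_ball).deriv.continuousOn).comp_continuous hcm
          (fun p => hball p.2)
      have hUc : Continuous fun p : (Icc (0:ℝ) 1) × ℝ => U p.2 :=
        ((hholo y).continuousOn).comp_continuous hcm (fun p => hball p.2)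
      have hVc : Continuous fun p : (Icc (0:ℝ) 1) × ℝ => V p.2 :=
        ((hholo y₁).continuousOn).comp_continuous hcm (fun p => hball p.2)
      have hdenne : ∀ p : (Icc (0:ℝ) 1) × ℝ, V p.2 + ((p.1 : ℝ) : ℂ) * (U p.2 - V p.2) ≠ 0 :=
        fun p => hft_sph p.1 p.1.2 _ (circleMap_mem_sphere σ₀ hr.le p.2)
      show Continuous fun p : (Icc (0:ℝ) 1) × ℝ => G p.1 p.2
      apply Continuous.mul
      · exact ((continuous_circleMap 0 r).comp continuous_snd).mul continuous_const
      · exact (hDVc.add (ht.mul (hDUc.sub hDVc))).div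
          (hVc.add (ht.mul (hUc.sub hVc))) hdenne
    have h0m : (0:ℝ) ∈ Icc (0:ℝ) 1 := ⟨le_refl 0, by norm_num⟩
    have h1m : (1:ℝ) ∈ Icc (0:ℝ) 1 := ⟨by norm_num, le_refl 1⟩
    have hconst := myConstant hJcont hJint ⟨1, h1m⟩ ⟨0, h0m⟩
    have hft0 : ft 0 = q y₁ := by funext σ; simp [hftdef]
    have hft1 : ft 1 = q y := by funext σ; simp [hftdef]
    have hJ0 : J ⟨0, h0m⟩ = W y₁ := by simp only [hJdef, hWdef]; rw [hft0]
    have hJ1 : J ⟨1, h1m⟩ = W y := by simp only [hJdef, hWdef]; rw [hft1]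
    rw [hJ1, hJ0] at hconst
    exact hconst
  -- global constancy of W
  obtain ⟨y₀⟩ := hX
  have hWconst : ∀ y : X, W y = W y₀ := by
    have hclopen : IsClopen {y | W y = W y₀} := by
      constructor
      · rw [← isOpen_compl_iff, isOpen_iff_mem_nhds]
        intro y hy
        obtain ⟨u, hu, hyu, hW⟩ := hloc y
        filter_upwards [hu.mem_nhds hyu] with y' hy'
        intro hy'0
        exact hy ((hW y' hy').symm.trans hy'0 : W y = W y₀)
      · rw [isOpen_iff_mem_nhds]
        intro y hy
        obtain ⟨u, hu, hyu, hW⟩ := hloc y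
        filter_upwards [hu.mem_nhds hyu] with y' hy'
        exact (hW y' hy').trans hy
    have := hclopen.eq_univ ⟨y₀, rfl⟩
    intro y
    have : y ∈ {y | W y = W y₀} := this ▸ mem_univ y
    exact this
  -- assemble
  obtain ⟨Z₀, ord₀, hZ₀, hprops₀, hint₀⟩ := hIV y₀
  refine ⟨∑ z ∈ Z₀, ord₀ z, ?_⟩
  intro y
  obtain ⟨Z, ord, hZset, hprops, hint⟩ := hIV y
  have hzero_small : ∀ σ : ℂ, σ ∈ closedBall σ₀ ε → q y σ = 0 → dist σ σ₀ < ε / 2 := by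
    intro σ hσ h0
    by_contra hge
    exact hne y σ (not_lt.1 hge) (mem_closedBall.1 hσ) h0
  have hZball : (↑Z : Set ℂ) = {σ ∈ ball σ₀ ε | q y σ = 0} := by
    rw [hZset]
    ext σ
    simp only [mem_setOf_eq, mem_sep_iff]
    constructor
    · rintro ⟨h1, h2⟩
      exact ⟨lt_of_le_of_lt (mem_closedBall.1 h1) hrε, h2⟩
    · rintro ⟨h1, h2⟩
      have := hzero_small σ (ball_subset_closedBall h1) h2
      exact ⟨mem_closedBall.2 (by rw [hrdef]; linarith), h2⟩
  have hZhalf : (↑Z : Set ℂ) ⊆ ball σ₀ (ε / 2) := by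
    intro σ hσ
    rw [hZset] at hσ
    exact mem_ball.2 (hzero_small σ (closedBall_subset_closedBall hrε.le hσ.1) hσ.2)
  refine ⟨Z, hZball, hZhalf, ord, ?_, ?_⟩
  · intro z hz
    obtain ⟨hpos, h, han, hne0, hev⟩ := hprops z hz
    have hcomb : ∀ᶠ σ in 𝓝 z, q y σ = (σ - z) ^ (ord z) * h σ ∧ AnalyticAt ℂ h σ :=
      hev.and han.eventually_analyticAt
    rw [Metric.eventually_nhds_iff_ball] at hcomb
    obtain ⟨ρ, hρ, hρball⟩ := hcomb
    refine ⟨ρ, h, hρ, ?_, hne0, ?_⟩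
    · intro w hw
      exact ((hρball w hw).2.differentiableAt).differentiableWithinAt
    · intro σ hσ
      exact (hρball σ hσ.1).1
  · -- the count is the same
    have h2πI : (2 * (Real.pi : ℂ) * I) ≠ 0 := by
      simp [Real.pi_ne_zero, Complex.I_ne_zero]
    have heq : ((∑ z ∈ Z, ord z : ℕ) : ℂ) = ((∑ z ∈ Z₀, ord₀ z : ℕ) : ℂ) :=
      mul_left_cancel₀ h2πI (by rw [← hint, ← hint₀]; exact hWconst y)
    exact_mod_cast heq
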